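/- Let S ⊂ ℂ be a finite set, let P_{2n} ∈ 𝒫_{2n}(S) be polynomials of degree at most 2n with all coefficients in S, and suppose H is a polynomial of minimal degree m such that sup_n NC(P_{2n}H) < ∞, where NC(P) denotes the number of nonzero coefficients of P. Then every zero of H is a root of unity. -/

import Mathlib

open Polynomial

/-- If `H` is a polynomial of minimal degree with `sup_n NC(P_{2n} H) < ∞`, where the `P_{2n}`
have all coefficients in a finite set `S ⊂ ℂ`, then every zero of `H` is a root of unity. -/
theorem minimal_H_zeros_are_roots_of_unity (S : Set ℂ) (hS : S.Finite)
    (P : ℕ → Polynomial ℂ)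
    (hdeg : ∀ n, (P n).natDegree ≤ 2 * n)
    (hcoeff : ∀ n, ∀ j ≤ 2 * n, (P n).coeff j ∈ S)
    (H : Polynomial ℂ) (hH : H ≠ 0)
    (hfin : ∃ C : ℕ, ∀ n, (P n * H).support.card ≤ C)
    (hmin : ∀ G : Polynomial ℂ, G ≠ 0 → G.natDegree < H.natDegree →
      ¬ ∃ C : ℕ, ∀ n, (P n * G).support.card ≤ C) :
    ∀ z : ℂ, H.IsRoot z → ∃ q : ℕ, 0 < q ∧ z ^ q = 1 := by
  intro z hz
  -- factor H = (X - C z) * G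
  obtain ⟨G, hG⟩ : (X - C z) ∣ H := dvd_iff_isRoot.mpr hz
  have hXz : (X - C z : Polynomial ℂ) ≠ 0 := X_sub_C_ne_zero z
  have hG0 : G ≠ 0 := by
    rintro rfl
    rw [mul_zero] at hG
    exact hH hG
  have hdegG : G.natDegree < H.natDegree := by
    rw [hG, natDegree_mul hXz hG0, natDegree_X_sub_C]
    omega
  have hunb := hmin G hG0 hdegG
  push_neg at hunb
  obtain ⟨C0, hC0⟩ := hfin
  -- coefficients of P n lie in S' := insert 0 S
  have hPmem : ∀ n k, (P n).coeff k ∈ insert (0 : ℂ) S := by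
    intro n k
    rcases le_or_gt k (2 * n) with h | h
    · exact Set.mem_insert_of_mem _ (hcoeff n k h)
    · have h0 : (P n).coeff k = 0 :=
        coeff_eq_zero_of_natDegree_lt (lt_of_le_of_lt (hdeg n) h)
      rw [h0]; exact Set.mem_insert _ _
  set d := G.natDegree with hd
  set T : Set ℂ :=
    (fun f : Fin (d + 1) → ℂ => ∑ i : Fin (d + 1), G.coeff (i : ℕ) * f i) ''
      (Set.pi Set.univ fun _ => insert (0 : ℂ) S) with hT
  have hTfin : T.Finite :=
    Set.Finite.image _ (Set.Finite.pi fun _ => hS.insert 0)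
  -- all coefficients of P n * G lie in T
  have hQmem : ∀ n k, (P n * G).coeff k ∈ T := by
    intro n k
    refine ⟨fun i => if (i : ℕ) ≤ k then (P n).coeff (k - i) else 0, ?_, ?_⟩
    · intro i _
      dsimp only
      split
      · exact hPmem n _
      · exact Set.mem_insert _ _
    · show (∑ i : Fin (d + 1), G.coeff (i : ℕ) *
          (if (i : ℕ) ≤ k then (P n).coeff (k - i) else 0)) = (P n * G).coeff k
      rw [mul_comm (P n) G, coeff_mul, Finset.Nat.sum_antidiagonal_eq_sum_range_succ_mk]
      rw [Fin.sum_univ_eq_sum_range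
        (fun i => G.coeff i * (if i ≤ k then (P n).coeff (k - i) else 0))]
      have h1 : (∑ i ∈ Finset.range (d + 1),
          G.coeff i * (if i ≤ k then (P n).coeff (k - i) else 0)) =
          ∑ i ∈ Finset.range (d + 1 + (k + 1)),
          G.coeff i * (if i ≤ k then (P n).coeff (k - i) else 0) := by
        apply Finset.sum_subset (Finset.range_subset_range.2 (by omega))
        intro i _ hi
        rw [Finset.mem_range] at hi
        have : G.coeff i = 0 := coeff_eq_zero_of_natDegree_lt (by omega)
        rw [this, zero_mul]
      have h2 : (∑ i ∈ Finset.range (k + 1),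
          G.coeff i * (if i ≤ k then (P n).coeff (k - i) else 0)) =
          ∑ i ∈ Finset.range (d + 1 + (k + 1)),
          G.coeff i * (if i ≤ k then (P n).coeff (k - i) else 0) := by
        apply Finset.sum_subset (Finset.range_subset_range.2 (by omega))
        intro i _ hi
        rw [Finset.mem_range] at hi
        rw [if_neg (by omega), mul_zero]
      rw [h1, ← h2]
      apply Finset.sum_congr rfl
      intro i hi
      rw [Finset.mem_range] at hi
      rw [if_pos (by omega)]
  -- the key coefficient recursion
  have hcoeffrel : ∀ n k, (P n * H).coeff (k + 1) =
      (P n * G).coeff k - z * (P n * G).coeff (k + 1) := by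
    intro n k
    have hPH : P n * H = X * (P n * G) - C z * (P n * G) := by
      rw [hG]; ring
    rw [hPH, coeff_sub, coeff_X_mul, coeff_C_mul]
  by_cases hz0 : z = 0
  · -- if z = 0, the support of P n * G injects (shifted) into that of P n * H
    exfalso
    obtain ⟨n, hn⟩ := hunb C0
    have hle : (P n * G).support.card ≤ (P n * H).support.card := by
      apply Finset.card_le_card_of_injOn (fun k => k + 1)
      · intro k hk
        simp only [Finset.mem_coe] at hk ⊢
        rw [mem_support_iff] at hk ⊢
        intro h
        apply hk
        have hr := hcoeffrel n k
        rw [h, hz0, zero_mul, sub_zero] at hr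
        exact hr.symm
      · intro a _ b _ h
        simpa using h
    have := hC0 n
    omega
  · -- main case: z ≠ 0
    set L := hTfin.toFinset.card with hL
    obtain ⟨n, hn⟩ := hunb (C0 * L)
    set Q := P n * G with hQ
    set E := (P n * H).support with hE
    have hEcard : E.card ≤ C0 := hC0 n
    set B := E.biUnion (fun e => Finset.Ico (e - L) e) with hB
    have hBcard : B.card ≤ C0 * L := by
      refine le_trans Finset.card_biUnion_le ?_
      calc ∑ e ∈ E, (Finset.Ico (e - L) e).card
          ≤ ∑ _e ∈ E, L := by
            apply Finset.sum_le_sum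
            intro e _
            rw [Nat.card_Ico]
            omega
        _ = E.card * L := by rw [Finset.sum_const, smul_eq_mul]
        _ ≤ C0 * L := Nat.mul_le_mul_right _ hEcard
    have hnsub : ¬ Q.support ⊆ B := by
      intro h
      have := Finset.card_le_card h
      omega
    obtain ⟨k, hkQ, hkB⟩ := Finset.not_subset.1 hnsub
    -- no exceptional position in (k, k + L]
    have hrun : ∀ j, 1 ≤ j → j ≤ L → (k + j) ∉ E := by
      intro j h1 h2 hmem
      exact hkB (Finset.mem_biUnion.2
        ⟨k + j, hmem, Finset.mem_Ico.2 ⟨by omega, by omega⟩⟩)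
    -- coefficients along the run form a nonvanishing geometric progression
    have hval : ∀ j, j ≤ L → Q.coeff (k + j) ≠ 0 ∧
        Q.coeff k = z ^ j * Q.coeff (k + j) := by
      intro j
      induction j with
      | zero =>
        intro _
        refine ⟨by simpa [mem_support_iff] using hkQ, by simp⟩
      | succ j ih =>
        intro hj
        obtain ⟨h1, h2⟩ := ih (by omega)
        have hnot : (P n * H).coeff (k + j + 1) = 0 := by
          have hmem := hrun (j + 1) (by omega) hj
          rw [← add_assoc] at hmem
          exact notMem_support_iff.1 hmem
        have hrel := hcoeffrel n (k + j)
        rw [hnot, ← hQ] at hrel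
        have heq : Q.coeff (k + j) = z * Q.coeff (k + (j + 1)) := by
          rw [← add_assoc]
          linear_combination -hrel
        constructor
        · intro h0
          rw [h0, mul_zero] at heq
          exact h1 heq
        · rw [h2, heq, pow_succ]
          ring
    -- pigeonhole: two equal values in T among L + 1 consecutive coefficients
    have hmaps : ∀ j ∈ Finset.range (L + 1), Q.coeff (k + j) ∈ hTfin.toFinset := by
      intro j _
      rw [Set.Finite.mem_toFinset]
      rw [hQ]
      exact hQmem n (k + j)
    obtain ⟨a, ha, b, hb, hab, habeq⟩ :=
      Finset.exists_ne_map_eq_of_card_lt_of_maps_to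
        (by rw [Finset.card_range]; omega) hmaps
    rw [Finset.mem_range] at ha hb
    have final : ∀ a b : ℕ, a ≤ L → b ≤ L → a < b →
        Q.coeff (k + a) = Q.coeff (k + b) → ∃ q : ℕ, 0 < q ∧ z ^ q = 1 := by
      intro a b haL hbL hlt he
      obtain ⟨hna, ha2⟩ := hval a haL
      obtain ⟨_, hb2⟩ := hval b hbL
      refine ⟨b - a, by omega, ?_⟩
      have h1 : z ^ a * Q.coeff (k + a) = z ^ b * Q.coeff (k + a) := by
        rw [← ha2, hb2, he]
      have h2 : z ^ a = z ^ b := mul_right_cancel₀ hna h1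
      have h3 : z ^ a * z ^ (b - a) = z ^ a * 1 := by
        rw [mul_one, ← pow_add, h2]
        congr 1
        omega
      exact mul_left_cancel₀ (pow_ne_zero a hz0) h3
    rcases lt_or_gt_of_ne hab with h | h
    · exact final a b (by omega) (by omega) h habeq
    · exact final b a (by omega) (by omega) h habeq.symm
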